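/- arXiv:2106.15607 — 4 statements merged into one kernel-verified Lean document; each statement's English description precedes it below -/
import Mathlib

section
/- Let $m \in \mathbb{Z}^{+} \cup \{0\}$ and $k \in \mathbb{Z}^{+}$ with $k > 1$, and define the sequence $(a_l)_{l \geq 1}$ by $a_l = 1/n$ if $l = n^k - m$ for some positive integer $n$ with $n^k > m$, and $a_l = 0$ otherwise. Then $\sup_{N \in \mathbb{N}} \sum_{j=1}^{\infty} \Big( \sum_{n=jN}^{(j+1)N - 1} a_n \Big)^2 \geq \frac{1}{8k^2}$. -/
set_option maxHeartbeats 1000000 in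
/-- For `m ≥ 0`, `k > 1` and the sequence `a_l = 1/n` when `l = n^k - m` (with `n ≥ 1`,
`n^k > m`) and `a_l = 0` otherwise, one has
`sup_N ∑_{j=1}^∞ (∑_{n=jN}^{(j+1)N-1} a_n)^2 ≥ 1/(8k^2)`. -/
theorem block_sums_lower_bound (m k : ℕ) (hk : 1 < k) (a : ℕ → ℝ)
    (ha : ∀ n : ℕ, 0 < n → m < n ^ k → a (n ^ k - m) = 1 / n)
    (ha0 : ∀ l : ℕ, (¬ ∃ n : ℕ, 0 < n ∧ m < n ^ k ∧ l = n ^ k - m) → a l = 0) :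
    ∀ c : ℝ, c < 1 / (8 * (k : ℝ) ^ 2) →
      ∃ N : ℕ, 0 < N ∧
        c < ∑' j : ℕ, (∑ n ∈ Finset.Ico ((j + 1) * N) ((j + 2) * N), a n) ^ 2 := by
  intro c hc
  have hk0 : 0 < k := by omega
  have hkR : (2 : ℝ) ≤ (k : ℝ) := by exact_mod_cast hk
  -- nonnegativity of a
  have hanon : ∀ l, 0 ≤ a l := by
    intro l
    by_cases h : ∃ n : ℕ, 0 < n ∧ m < n ^ k ∧ l = n ^ k - m
    · obtain ⟨n, hn, hm, rfl⟩ := h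
      rw [ha n hn hm]
      positivity
    · rw [ha0 l h]
  -- summability of a^2
  have hex : ∃ n : ℕ, 0 < n ∧ m < n ^ k :=
    ⟨m + 1, by omega, lt_of_lt_of_le (by omega) (Nat.le_self_pow (by omega) _)⟩
  set n₁ := Nat.find hex with hn₁def
  obtain ⟨hn₁pos, hn₁m⟩ : 0 < n₁ ∧ m < n₁ ^ k := Nat.find_spec hex
  set g : ℕ → ℕ := fun n => (n + n₁) ^ k - m with hgdef
  have hgm : ∀ n : ℕ, m < (n + n₁) ^ k := fun n =>
    lt_of_lt_of_le hn₁m (Nat.pow_le_pow_left (by omega) k)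
  have hgmono : StrictMono g := by
    intro i j hij
    have h1 := hgm i
    have h2 : (i + n₁) ^ k < (j + n₁) ^ k := Nat.pow_lt_pow_left (by omega) (by omega)
    simp only [hgdef]
    omega
  have hsupp : ∀ l, l ∉ Set.range g → (a l) ^ 2 = 0 := by
    intro l hl
    rw [ha0 l, zero_pow (by norm_num)]
    rintro ⟨n, hn, hnm, rfl⟩
    have hle : n₁ ≤ n := Nat.find_min' hex ⟨hn, hnm⟩
    exact hl ⟨n - n₁, by simp only [hgdef]; rw [Nat.sub_add_cancel hle]⟩
  have hbase : Summable (fun n : ℕ => (1 / ((n : ℝ) + 1)) ^ 2) := by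
    have h2 : Summable (fun n : ℕ => 1 / (n : ℝ) ^ 2) :=
      Real.summable_one_div_nat_pow.mpr one_lt_two
    have h3 := (summable_nat_add_iff 1).mpr h2
    apply h3.congr
    intro n
    push_cast
    rw [div_pow, one_pow]
  have hsq : Summable (fun l => (a l) ^ 2) := by
    rw [← hgmono.injective.summable_iff hsupp]
    apply Summable.of_nonneg_of_le (fun n => sq_nonneg _) _ hbase
    intro n
    have hval : a (g n) = 1 / ((n : ℝ) + (n₁ : ℝ)) := by
      have := ha (n + n₁) (by omega) (hgm n)
      simp only [hgdef]
      rw [this]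
      push_cast
      ring_nf
    simp only [Function.comp_apply, hval]
    apply pow_le_pow_left₀ (by positivity)
    apply one_div_le_one_div_of_le (by positivity)
    have : (1 : ℝ) ≤ (n₁ : ℝ) := by exact_mod_cast hn₁pos
    linarith
  -- parameters
  set P := m + 1 with hPdef
  set M := 2 * k * P with hMdef
  have hMpos : 0 < M := by positivity
  have hM1 : (1 : ℝ) ≤ (M : ℝ) := by exact_mod_cast hMpos
  have hmM : m < M ^ k := by
    have h1 : m + 1 ≤ M := by
      have : P ≤ 2 * k * P := Nat.le_mul_of_pos_left P (by omega)
      omega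
    have h2 : M ≤ M ^ k := Nat.le_self_pow (by omega) _
    omega
  set N := M ^ k - m with hNdef
  have hNpos : 0 < N := by omega
  refine ⟨N, hNpos, ?_⟩
  -- real bounds
  have hMRpos : (0 : ℝ) < (M : ℝ) := by positivity
  have hMkpos : (0 : ℝ) < (M : ℝ) ^ k := by positivity
  have hexp : ((M : ℝ) + (P : ℝ)) ^ k ≤ 1.65 * (M : ℝ) ^ k := by
    have hPpos : (0 : ℝ) < (P : ℝ) := by positivity
    have h1 : (M : ℝ) + (P : ℝ) = (M : ℝ) * (1 + 1 / (2 * (k : ℝ))) := by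
      have hMeq : (M : ℝ) = 2 * (k : ℝ) * (P : ℝ) := by
        simp only [hMdef]; push_cast; ring
      rw [hMeq]
      field_simp
    rw [h1, mul_pow]
    have h2 : (1 + 1 / (2 * (k : ℝ))) ^ k ≤ Real.exp (1 / 2) := by
      have hle := Real.add_one_le_exp (1 / (2 * (k : ℝ)))
      calc (1 + 1 / (2 * (k : ℝ))) ^ k ≤ Real.exp (1 / (2 * (k : ℝ))) ^ k := by
            apply pow_le_pow_left₀ (by positivity) (by linarith)
        _ = Real.exp ((k : ℝ) * (1 / (2 * (k : ℝ)))) := by rw [← Real.exp_nat_mul]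
        _ = Real.exp (1 / 2) := by
            congr 1
            field_simp
    have h3 : Real.exp (1 / 2) ≤ 1.65 := by
      have e1 : Real.exp (1 / 2) * Real.exp (1 / 2) = Real.exp 1 := by
        rw [← Real.exp_add]; norm_num
      nlinarith [Real.exp_one_lt_d9, Real.exp_pos (1 / 2 : ℝ)]
    have h4 : (1 + 1 / (2 * (k : ℝ))) ^ k ≤ 1.65 := h2.trans h3
    nlinarith [pow_pos hMRpos k]
  have h16 : 16 * ((m : ℝ) + 1) ≤ (M : ℝ) ^ k := by
    have hsq2 : (M : ℝ) ^ 2 ≤ (M : ℝ) ^ k := pow_le_pow_right₀ hM1 hk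
    have hMeq : (M : ℝ) = 2 * (k : ℝ) * ((m : ℝ) + 1) := by
      simp only [hMdef, hPdef]; push_cast; ring
    have hmR : (0 : ℝ) ≤ (m : ℝ) := Nat.cast_nonneg m
    nlinarith [sq_nonneg ((m : ℝ) + 1), sq_nonneg ((k : ℝ) - 2)]
  -- key integer inequality
  have hstar : ∀ n : ℕ, n ≤ M + P → n ^ k + m < 2 * M ^ k := by
    intro n hn
    have h1 : ((n : ℝ)) ^ k ≤ ((M : ℝ) + (P : ℝ)) ^ k := by
      apply pow_le_pow_left₀ (Nat.cast_nonneg n)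
      exact_mod_cast hn
    have h2 : (m : ℝ) + 1 ≤ (M : ℝ) ^ k / 16 := by linarith
    have hR : ((n : ℝ)) ^ k + (m : ℝ) < 2 * (M : ℝ) ^ k := by nlinarith
    have : ((n ^ k + m : ℕ) : ℝ) < ((2 * M ^ k : ℕ) : ℝ) := by push_cast; linarith
    exact_mod_cast this
  -- the block sum for j = 0
  have hmem : ∀ n ∈ Finset.Icc M (M + P),
      n ^ k - m ∈ Finset.Ico ((0 + 1) * N) ((0 + 2) * N) := by
    intro n hn
    rw [Finset.mem_Icc] at hn
    have hnk : M ^ k ≤ n ^ k := Nat.pow_le_pow_left hn.1 k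
    have hup := hstar n hn.2
    rw [Finset.mem_Ico]
    constructor
    · simp only [hNdef]; omega
    · simp only [hNdef]; omega
  have hinj : ∀ x ∈ Finset.Icc M (M + P), ∀ y ∈ Finset.Icc M (M + P),
      x ^ k - m = y ^ k - m → x = y := by
    intro x hx y hy hxy
    rw [Finset.mem_Icc] at hx hy
    have hxk : M ^ k ≤ x ^ k := Nat.pow_le_pow_left hx.1 k
    have hyk : M ^ k ≤ y ^ k := Nat.pow_le_pow_left hy.1 k
    have hpow : x ^ k = y ^ k := by omega
    exact Nat.pow_left_injective (by omega) hpow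
  have hS : (1 : ℝ) / (2 * (k : ℝ) + 1) ≤
      ∑ l ∈ Finset.Ico ((0 + 1) * N) ((0 + 2) * N), a l := by
    have hsub : (Finset.Icc M (M + P)).image (fun n => n ^ k - m) ⊆
        Finset.Ico ((0 + 1) * N) ((0 + 2) * N) := by
      intro l hl
      rw [Finset.mem_image] at hl
      obtain ⟨n, hn, rfl⟩ := hl
      exact hmem n hn
    have h1 : ∑ l ∈ (Finset.Icc M (M + P)).image (fun n => n ^ k - m), a l ≤
        ∑ l ∈ Finset.Ico ((0 + 1) * N) ((0 + 2) * N), a l :=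
      Finset.sum_le_sum_of_subset_of_nonneg hsub (fun i _ _ => hanon i)
    have h2 : ∑ l ∈ (Finset.Icc M (M + P)).image (fun n => n ^ k - m), a l =
        ∑ n ∈ Finset.Icc M (M + P), a (n ^ k - m) := Finset.sum_image hinj
    have h3 : ∀ n ∈ Finset.Icc M (M + P), 1 / ((M : ℝ) + (P : ℝ)) ≤ a (n ^ k - m) := by
      intro n hn
      rw [Finset.mem_Icc] at hn
      have hnpos : 0 < n := lt_of_lt_of_le hMpos hn.1
      have hnm : m < n ^ k := lt_of_lt_of_le hmM (Nat.pow_le_pow_left hn.1 k)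
      rw [ha n hnpos hnm]
      apply one_div_le_one_div_of_le (by exact_mod_cast hnpos)
      calc ((n : ℝ)) ≤ ((M + P : ℕ) : ℝ) := by exact_mod_cast hn.2
        _ = (M : ℝ) + (P : ℝ) := by push_cast; ring
    have h4 : (Finset.Icc M (M + P)).card • (1 / ((M : ℝ) + (P : ℝ))) ≤
        ∑ n ∈ Finset.Icc M (M + P), a (n ^ k - m) :=
      Finset.card_nsmul_le_sum _ _ _ h3
    have hcard : (Finset.Icc M (M + P)).card = P + 1 := by
      rw [Nat.card_Icc]; omega
    have h5 : (1 : ℝ) / (2 * (k : ℝ) + 1) ≤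
        ((P : ℝ) + 1) * (1 / ((M : ℝ) + (P : ℝ))) := by
      have hMeq : (M : ℝ) + (P : ℝ) = (2 * (k : ℝ) + 1) * (P : ℝ) := by
        simp only [hMdef]; push_cast; ring
      have hPpos : (0 : ℝ) < (P : ℝ) := by positivity
      rw [hMeq, mul_one_div, div_le_div_iff₀ (by positivity) (by positivity)]
      nlinarith
    calc (1 : ℝ) / (2 * (k : ℝ) + 1) ≤ ((P : ℝ) + 1) * (1 / ((M : ℝ) + (P : ℝ))) := h5
      _ = (Finset.Icc M (M + P)).card • (1 / ((M : ℝ) + (P : ℝ))) := by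
          rw [hcard, nsmul_eq_mul]; push_cast; ring
      _ ≤ ∑ n ∈ Finset.Icc M (M + P), a (n ^ k - m) := h4
      _ = _ := h2.symm
      _ ≤ _ := h1
  -- summability of block sums of a^2
  have hTsum : Summable (fun j : ℕ => ∑ l ∈ Finset.Ico ((j + 1) * N) ((j + 2) * N), (a l) ^ 2) := by
    apply summable_of_sum_range_le (c := ∑' l, (a l) ^ 2)
      (fun j => Finset.sum_nonneg fun l _ => sq_nonneg _)
    intro J
    have hJ : ∑ j ∈ Finset.range J, ∑ l ∈ Finset.Ico ((j + 1) * N) ((j + 2) * N), (a l) ^ 2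
        = ∑ l ∈ Finset.Ico N ((J + 1) * N), (a l) ^ 2 := by
      induction J with
      | zero => simp
      | succ J ih =>
        rw [Finset.sum_range_succ, ih]
        have e1 : N ≤ (J + 1) * N := Nat.le_mul_of_pos_left N (by omega)
        have e2 : (J + 1) * N ≤ (J + 2) * N := Nat.mul_le_mul_right N (by omega)
        rw [Finset.sum_Ico_consecutive _ e1 e2]
    rw [hJ]
    calc ∑ l ∈ Finset.Ico N ((J + 1) * N), (a l) ^ 2
        ≤ ∑ l ∈ Finset.range ((J + 1) * N), (a l) ^ 2 := by
          apply Finset.sum_le_sum_of_subset_of_nonneg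
          · intro x hx
            rw [Finset.mem_Ico] at hx
            rw [Finset.mem_range]
            omega
          · intro i _ _
            exact sq_nonneg _
      _ ≤ ∑' l, (a l) ^ 2 := Summable.sum_le_tsum _ (fun i _ => sq_nonneg _) hsq
  -- summability of squared block sums
  have hcardIco : ∀ j : ℕ, (Finset.Ico ((j + 1) * N) ((j + 2) * N)).card = N := by
    intro j
    rw [Nat.card_Ico]
    have : (j + 2) * N = (j + 1) * N + N := by ring
    omega
  have hCS : ∀ j : ℕ, (∑ l ∈ Finset.Ico ((j + 1) * N) ((j + 2) * N), a l) ^ 2 ≤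
      (N : ℝ) * ∑ l ∈ Finset.Ico ((j + 1) * N) ((j + 2) * N), (a l) ^ 2 := by
    intro j
    have := sq_sum_le_card_mul_sum_sq
      (s := Finset.Ico ((j + 1) * N) ((j + 2) * N)) (f := a)
    rwa [hcardIco j] at this
  have hSsum : Summable
      (fun j : ℕ => (∑ l ∈ Finset.Ico ((j + 1) * N) ((j + 2) * N), a l) ^ 2) := by
    apply Summable.of_nonneg_of_le (fun j => sq_nonneg _) hCS
    exact hTsum.mul_left _
  -- conclude
  have hfirst : (∑ l ∈ Finset.Ico ((0 + 1) * N) ((0 + 2) * N), a l) ^ 2 ≤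
      ∑' j : ℕ, (∑ l ∈ Finset.Ico ((j + 1) * N) ((j + 2) * N), a l) ^ 2 :=
    Summable.le_tsum hSsum 0 (fun i _ => sq_nonneg _)
  have hlow : 1 / (8 * (k : ℝ) ^ 2) ≤
      (∑ l ∈ Finset.Ico ((0 + 1) * N) ((0 + 2) * N), a l) ^ 2 := by
    have hpos : (0 : ℝ) < 1 / (2 * (k : ℝ) + 1) := by positivity
    have hsq2 : (1 / (2 * (k : ℝ) + 1)) ^ 2 ≤
        (∑ l ∈ Finset.Ico ((0 + 1) * N) ((0 + 2) * N), a l) ^ 2 :=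
      pow_le_pow_left₀ (le_of_lt hpos) hS 2
    have hkk : 1 / (8 * (k : ℝ) ^ 2) ≤ (1 / (2 * (k : ℝ) + 1)) ^ 2 := by
      rw [div_pow, one_pow, div_le_div_iff₀ (by positivity) (by positivity)]
      nlinarith
    linarith
  linarith
end

section
/- Let $k \in \mathbb{N}$ with $k \geq 1$, and let $a, q$ be coprime positive integers. Then the partial sums $\sum_{n=1}^{N} \frac{e(n^k a/q)}{n}$ converge as $N \to \infty$ if and only if $\sum_{n=1}^{q} e\big(\frac{a}{q} n^k\big) = 0$. -/
open Filter Finset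

/-- `e t = exp(2πit)`. -/
noncomputable def e (t : ℝ) : ℂ := Complex.exp (2 * Real.pi * Complex.I * t)

lemma e_add_nat (t : ℝ) (m : ℕ) : e (t + m) = e t := by
  unfold e
  rw [show ((2 * Real.pi * Complex.I * (t + m : ℝ) : ℂ)) =
      2 * Real.pi * Complex.I * t + (m : ℂ) * (2 * Real.pi * Complex.I) from by
    push_cast; ring]
  rw [Complex.exp_add, Complex.exp_nat_mul_two_pi_mul_I, mul_one]

lemma norm_e (t : ℝ) : ‖e t‖ = 1 := by
  unfold e
  rw [show ((2 * Real.pi * Complex.I * (t : ℝ) : ℂ)) = ((2 * Real.pi * t : ℝ) : ℂ) * Complex.I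
    from by push_cast; ring]
  exact Complex.norm_exp_ofReal_mul_I _

private lemma sum_range_add' (f : ℕ → ℂ) (m n : ℕ) :
    ∑ i ∈ range (m + n), f i = ∑ i ∈ range m, f i + ∑ i ∈ range n, f (m + i) := by
  calc ∑ i ∈ range (m + n), f i
      = ∑ i ∈ Ico 0 m, f i + ∑ i ∈ Ico m (m + n), f i := by
        rw [Finset.sum_Ico_consecutive f (Nat.zero_le m) (Nat.le_add_right m n), range_eq_Ico]
    _ = ∑ i ∈ range m, f i + ∑ i ∈ range n, f (m + i) := by
        rw [← range_eq_Ico, Finset.sum_Ico_eq_sum_range, Nat.add_sub_cancel_left]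

private lemma icc_sum_eq (f : ℕ → ℂ) (N : ℕ) :
    ∑ n ∈ Icc 1 N, f n = ∑ i ∈ range N, f (1 + i) := by
  rw [← Finset.Ico_add_one_right_eq_Icc, Finset.sum_Ico_eq_sum_range]
  simp

private lemma inv_sub_inv_bound {A B c m : ℝ} (hA : 0 < A) (hAB : A ≤ B)
    (hm : 0 < m) (hmA : m ≤ A) (hmB : m ≤ B) (hBA : B - A ≤ c) :
    |A⁻¹ - B⁻¹| ≤ c * (m ^ 2)⁻¹ := by
  have hB : 0 < B := lt_of_lt_of_le hA hAB
  have habs : A⁻¹ - B⁻¹ = (B - A) / (A * B) := inv_sub_inv (ne_of_gt hA) (ne_of_gt hB)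
  rw [habs, abs_of_nonneg (div_nonneg (by linarith) (by positivity)),
    div_le_iff₀ (by positivity)]
  have hmne : (m : ℝ) ^ 2 ≠ 0 := by positivity
  calc B - A ≤ c := hBA
    _ = c * (m ^ 2)⁻¹ * (m * m) := by
        rw [show c * (m ^ 2)⁻¹ * (m * m) = c * ((m ^ 2) * (m ^ 2)⁻¹) from by ring,
          mul_inv_cancel₀ hmne, mul_one]
    _ ≤ c * (m ^ 2)⁻¹ * (A * B) := by
        have hc : 0 ≤ c := le_trans (by linarith) hBA
        apply mul_le_mul_of_nonneg_left _ (by positivity)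
        exact mul_le_mul hmA hmB (le_of_lt hm) (le_of_lt hA)

lemma periodic_criterion (f : ℕ → ℂ) (q : ℕ) (hq : 0 < q)
    (hper : ∀ n, f (n + q) = f n) (hnorm : ∀ n, ‖f n‖ ≤ 1) :
    (∃ L : ℂ, Tendsto (fun N : ℕ => ∑ n ∈ Finset.Icc 1 N, f n / n) atTop (nhds L)) ↔
    ∑ n ∈ Finset.Icc 1 q, f n = 0 := by
  have hper' : ∀ n m, f (n + q * m) = f n := by
    intro n m
    induction m with
    | zero => simp
    | succ m ih => rw [Nat.mul_succ, ← Nat.add_assoc, hper, ih]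
  set S : ℂ := ∑ j ∈ range q, f (1 + j) with hS_def
  have hQ : ∀ n, ∑ j ∈ range q, f (n + 1 + j) = ∑ j ∈ range q, f (n + j) := by
    intro n
    have e1 := Finset.sum_range_succ (fun j => f (n + j)) q
    have e2 := Finset.sum_range_succ' (fun j => f (n + j)) q
    have e3 : ∑ j ∈ range q, f (n + 1 + j) = ∑ j ∈ range q, f (n + (j + 1)) := by
      apply Finset.sum_congr rfl; intro j _; congr 1; omega
    have h4 : ∑ j ∈ range q, f (n + (j + 1)) + f (n + 0) =
        ∑ j ∈ range q, f (n + j) + f (n + q) := by rw [← e2, e1]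
    rw [hper n] at h4
    rw [e3]
    simpa using h4
  have hQ' : ∀ n, ∑ j ∈ range q, f (n + j) = ∑ j ∈ range q, f j := by
    intro n
    induction n with
    | zero => simp
    | succ m ih => rw [hQ m, ih]
  have hQS : ∀ n, ∑ j ∈ range q, f (n + j) = S := by
    intro n; rw [hQ' n, hS_def, ← hQ' 1]
  have hT : ∀ N : ℕ, ∑ n ∈ Icc 1 N, f n / n =
      ∑ i ∈ range N, f (1 + i) / ((1 + i : ℕ) : ℂ) := by
    intro N
    exact icc_sum_eq (fun n => f n / n) N
  have hIccS : ∑ n ∈ Icc 1 q, f n = S := icc_sum_eq f q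
  rw [hIccS]
  constructor
  · rintro ⟨L, hL⟩
    by_contra hS
    set d : ℕ → ℂ := fun M => ∑ j ∈ range q, f (1 + j) * ((1 + (q * M + j) : ℕ) : ℂ)⁻¹ with hd_def
    have hblock : ∀ K, ∑ M ∈ range K, d M = ∑ i ∈ range (q * K), f (1 + i) / ((1 + i : ℕ) : ℂ) := by
      intro K
      induction K with
      | zero => simp
      | succ K ih =>
        rw [Finset.sum_range_succ, ih, Nat.mul_succ, sum_range_add']
        congr 1
        show (∑ j ∈ range q, f (1 + j) * ((1 + (q * K + j) : ℕ) : ℂ)⁻¹) = _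
        apply Finset.sum_congr rfl
        intro j _
        have h2 : f (1 + (q * K + j)) = f (1 + j) := by
          rw [show 1 + (q * K + j) = (1 + j) + q * K from by omega, hper']
        rw [h2, div_eq_mul_inv]
    have hqK : Tendsto (fun K : ℕ => q * K) atTop atTop :=
      tendsto_atTop_mono (fun K => Nat.le_mul_of_pos_left K hq) tendsto_id
    have hdL : Tendsto (fun K => ∑ M ∈ range K, d M) atTop (nhds L) := by
      have h5 : Tendsto (fun N : ℕ => ∑ i ∈ range N, f (1 + i) / ((1 + i : ℕ) : ℂ)) atTop
          (nhds L) := by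
        apply hL.congr; intro N; exact hT N
      exact (h5.comp hqK).congr (fun K => (hblock K).symm)
    set u : ℕ → ℂ := fun M => d M - S * ((q * (M + 1) : ℕ) : ℂ)⁻¹ with hu_def
    have hu_bound : ∀ M, ‖u M‖ ≤ (q : ℝ) ^ 2 * (((M : ℝ) + 1) ^ 2)⁻¹ := by
      intro M
      have hrw : u M = ∑ j ∈ range q,
          f (1 + j) * (((1 + (q * M + j) : ℕ) : ℂ)⁻¹ - ((q * (M + 1) : ℕ) : ℂ)⁻¹) := by
        show (∑ j ∈ range q, f (1 + j) * ((1 + (q * M + j) : ℕ) : ℂ)⁻¹)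
            - (∑ j ∈ range q, f (1 + j)) * ((q * (M + 1) : ℕ) : ℂ)⁻¹ = _
        rw [Finset.sum_mul, ← Finset.sum_sub_distrib]
        exact Finset.sum_congr rfl fun j _ => by ring
      rw [hrw]
      calc ‖∑ j ∈ range q, f (1 + j) * (((1 + (q * M + j) : ℕ) : ℂ)⁻¹ - ((q * (M + 1) : ℕ) : ℂ)⁻¹)‖
          ≤ ∑ j ∈ range q,
            ‖f (1 + j) * (((1 + (q * M + j) : ℕ) : ℂ)⁻¹ - ((q * (M + 1) : ℕ) : ℂ)⁻¹)‖ :=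
            norm_sum_le _ _
        _ ≤ ∑ j ∈ range q, (q : ℝ) * (((M : ℝ) + 1) ^ 2)⁻¹ := by
            apply Finset.sum_le_sum
            intro j hj
            have hj' : j < q := Finset.mem_range.mp hj
            rw [norm_mul]
            have h2 : ‖(((1 + (q * M + j) : ℕ) : ℂ)⁻¹ - ((q * (M + 1) : ℕ) : ℂ)⁻¹)‖ ≤
                (q : ℝ) * (((M : ℝ) + 1) ^ 2)⁻¹ := by
              have hcast : (((1 + (q * M + j) : ℕ) : ℂ)⁻¹ - ((q * (M + 1) : ℕ) : ℂ)⁻¹) =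
                  ((((1 + (q * M + j) : ℕ) : ℝ)⁻¹ - ((q * (M + 1) : ℕ) : ℝ)⁻¹ : ℝ) : ℂ) := by
                push_cast; ring
              rw [hcast, Complex.norm_real]
              apply inv_sub_inv_bound
              · positivity
              · exact_mod_cast Nat.cast_le.mpr (by nlinarith : (1 + (q * M + j) : ℕ) ≤ q * (M + 1))
              · positivity
              · have : (M + 1 : ℕ) ≤ (1 + (q * M + j) : ℕ) := by nlinarith
                exact_mod_cast this
              · have : (M + 1 : ℕ) ≤ (q * (M + 1) : ℕ) := Nat.le_mul_of_pos_left _ hq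
                exact_mod_cast this
              · have : (q * (M + 1) : ℕ) ≤ (1 + (q * M + j) : ℕ) + q := by nlinarith
                have h' : ((q * (M + 1) : ℕ) : ℝ) ≤ ((1 + (q * M + j) : ℕ) : ℝ) + q := by
                  exact_mod_cast this
                linarith
            calc ‖f (1 + j)‖ * ‖(((1 + (q * M + j) : ℕ) : ℂ)⁻¹ - ((q * (M + 1) : ℕ) : ℂ)⁻¹)‖
                ≤ 1 * ((q : ℝ) * (((M : ℝ) + 1) ^ 2)⁻¹) :=
                  mul_le_mul (hnorm _) h2 (norm_nonneg _) (by norm_num)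
              _ = (q : ℝ) * (((M : ℝ) + 1) ^ 2)⁻¹ := by ring
        _ = (q : ℝ) ^ 2 * (((M : ℝ) + 1) ^ 2)⁻¹ := by
            rw [Finset.sum_const, Finset.card_range, nsmul_eq_mul]; ring
    have hbsum : Summable (fun M : ℕ => (q : ℝ) ^ 2 * (((M : ℝ) + 1) ^ 2)⁻¹) := by
      apply Summable.mul_left
      have h0 : Summable (fun n : ℕ => ((n : ℝ) ^ 2)⁻¹) := Real.summable_nat_pow_inv.mpr one_lt_two
      have h1 := (summable_nat_add_iff 1).mpr h0
      apply h1.congr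
      intro n
      push_cast
      ring_nf
    have hu_sum : Summable u := Summable.of_norm_bounded hbsum hu_bound
    have huL : Tendsto (fun K => ∑ M ∈ range K, u M) atTop (nhds (∑' M, u M)) :=
      hu_sum.hasSum.tendsto_sum_nat
    have hSsum : Tendsto (fun K => ∑ M ∈ range K, S * ((q * (M + 1) : ℕ) : ℂ)⁻¹) atTop
        (nhds (L - ∑' M, u M)) := by
      apply (hdL.sub huL).congr
      intro K
      rw [← Finset.sum_sub_distrib]
      apply Finset.sum_congr rfl
      intro M _
      show d M - (d M - S * ((q * (M + 1) : ℕ) : ℂ)⁻¹) = _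
      ring
    have hinv : Tendsto (fun K => ∑ M ∈ range K, ((q * (M + 1) : ℕ) : ℂ)⁻¹) atTop
        (nhds (S⁻¹ * (L - ∑' M, u M))) := by
      apply (hSsum.const_mul S⁻¹).congr
      intro K
      rw [Finset.mul_sum]
      apply Finset.sum_congr rfl
      intro M _
      rw [← mul_assoc, inv_mul_cancel₀ hS, one_mul]
    have hreal : Tendsto (fun K => ∑ M ∈ range K, ((q * (M + 1) : ℕ) : ℝ)⁻¹) atTop
        (nhds (S⁻¹ * (L - ∑' M, u M)).re) := by
      have h6 :=
        ((Complex.continuous_re.tendsto _).comp hinv :)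
      apply h6.congr
      intro K
      simp only [Function.comp_apply]
      rw [show (∑ M ∈ range K, ((q * (M + 1) : ℕ) : ℂ)⁻¹) =
          (((∑ M ∈ range K, ((q * (M + 1) : ℕ) : ℝ)⁻¹ : ℝ)) : ℂ) from by push_cast; ring]
      rw [Complex.ofReal_re]
    have hmono : Monotone (fun K => ∑ M ∈ range K, ((q * (M + 1) : ℕ) : ℝ)⁻¹) := by
      apply monotone_nat_of_le_succ
      intro n
      rw [Finset.sum_range_succ]
      have : (0:ℝ) ≤ ((q * (n + 1) : ℕ) : ℝ)⁻¹ := by positivity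
      linarith
    have hbd : ∀ K, ∑ M ∈ range K, ((q * (M + 1) : ℕ) : ℝ)⁻¹ ≤ (S⁻¹ * (L - ∑' M, u M)).re :=
      hmono.ge_of_tendsto hreal
    have hsum1 : Summable (fun M : ℕ => ((q * (M + 1) : ℕ) : ℝ)⁻¹) :=
      summable_of_sum_range_le (fun n => by positivity) hbd
    have hsum2 : Summable (fun M : ℕ => ((M + 1 : ℕ) : ℝ)⁻¹) := by
      apply (hsum1.mul_left (q : ℝ)).congr
      intro M
      have hq' : ((q : ℝ)) ≠ 0 := by positivity
      push_cast
      field_simp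
    have hsum3 : Summable (fun M : ℕ => ((M : ℕ) : ℝ)⁻¹) := (summable_nat_add_iff 1).mp hsum2
    exact Real.not_summable_natCast_inv hsum3
  · intro hS
    set P : ℕ → ℂ := fun n => ∑ i ∈ range n, f (1 + i) with hP_def
    have hPper : ∀ n, P (n + q) = P n := by
      intro n
      show ∑ i ∈ range (n + q), f (1 + i) = ∑ i ∈ range n, f (1 + i)
      rw [sum_range_add']
      have h7 : ∑ i ∈ range q, f (1 + (n + i)) = S := by
        rw [← hQS (1 + n)]
        apply Finset.sum_congr rfl
        intro j _
        congr 1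
        omega
      rw [h7, hS, add_zero]
    have hPmod : ∀ n, P n = P (n % q) := by
      intro n
      induction n using Nat.strong_induction_on with
      | _ n ih =>
        by_cases h : n < q
        · rw [Nat.mod_eq_of_lt h]
        · push_neg at h
          have h1 : n - q + q = n := Nat.sub_add_cancel h
          have h2 := hPper (n - q)
          rw [h1] at h2
          rw [h2, ih (n - q) (by omega), Nat.mod_eq_sub_mod h]
    have hPbound : ∀ n, ‖P n‖ ≤ (q : ℝ) := by
      intro n
      rw [hPmod n]
      calc ‖P (n % q)‖ ≤ ∑ i ∈ range (n % q), ‖f (1 + i)‖ := norm_sum_le _ _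
        _ ≤ ∑ i ∈ range (n % q), 1 := Finset.sum_le_sum (fun i _ => hnorm _)
        _ = (n % q : ℕ) := by simp
        _ ≤ (q : ℝ) := by exact_mod_cast le_of_lt (Nat.mod_lt n hq)
    have hanti : Antitone (fun i : ℕ => ((i : ℝ) + 1)⁻¹) := by
      intro m n h
      apply inv_anti₀ (by positivity)
      have : (m : ℝ) ≤ n := by exact_mod_cast h
      linarith
    have h0 : Tendsto (fun i : ℕ => ((i : ℝ) + 1)⁻¹) atTop (nhds 0) := by
      apply tendsto_one_div_add_atTop_nhds_zero_nat.congr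
      intro n
      rw [one_div]
    have hcauchy : CauchySeq (fun N => ∑ i ∈ range N, ((i : ℝ) + 1)⁻¹ • f (1 + i)) :=
      hanti.cauchySeq_series_mul_of_tendsto_zero_of_bounded h0 hPbound
    have hfun : (fun N => ∑ i ∈ range N, ((i : ℝ) + 1)⁻¹ • f (1 + i)) =
        (fun N : ℕ => ∑ n ∈ Icc 1 N, f n / n) := by
      funext N
      rw [hT N]
      apply Finset.sum_congr rfl
      intro i _
      rw [Complex.real_smul]
      push_cast
      rw [div_eq_mul_inv, add_comm]
      ring
    rw [← hfun]
    exact cauchySeq_tendsto_of_complete hcauchy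

/-- For `k ≥ 1` and coprime positive integers `a, q`, the series `∑ e(n^k a/q)/n`
converges iff the complete sum `∑_{n=1}^q e(a n^k/q)` vanishes. -/
theorem rational_point_convergence_criterion (k : ℕ) (hk : 1 ≤ k)
    (a q : ℕ) (ha : 0 < a) (hq : 0 < q) (hcop : Nat.Coprime a q) :
    (∃ L : ℂ, Tendsto
        (fun N : ℕ => ∑ n ∈ Finset.Icc 1 N, e ((n : ℝ) ^ k * ((a : ℝ) / (q : ℝ))) / n)
        atTop (nhds L)) ↔
    ∑ n ∈ Finset.Icc 1 q, e ((a : ℝ) / q * (n : ℝ) ^ k) = 0 := by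
  have hper : ∀ n : ℕ, (fun n : ℕ => e ((n : ℝ) ^ k * ((a : ℝ) / (q : ℝ)))) (n + q) =
      (fun n : ℕ => e ((n : ℝ) ^ k * ((a : ℝ) / (q : ℝ)))) n := by
    intro n
    simp only
    have h1 : Nat.ModEq q (n + q) n := Nat.add_mod_right n q
    have h2 : Nat.ModEq q ((n + q) ^ k) (n ^ k) := h1.pow k
    have hle : n ^ k ≤ (n + q) ^ k := Nat.pow_le_pow_left (Nat.le_add_right n q) k
    obtain ⟨c, hc⟩ : q ∣ (n + q) ^ k - n ^ k := (Nat.modEq_iff_dvd' hle).mp h2.symm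
    have hck : (n + q) ^ k = n ^ k + q * c := by omega
    have hq0 : (q : ℝ) ≠ 0 := by positivity
    have harg : ((n + q : ℕ) : ℝ) ^ k * ((a : ℝ) / q) =
        (n : ℝ) ^ k * ((a : ℝ) / q) + ((c * a : ℕ) : ℝ) := by
      have hcr : ((n : ℝ) + q) ^ k = (n : ℝ) ^ k + q * c := by exact_mod_cast congrArg Nat.cast hck
      push_cast
      rw [hcr]
      field_simp
    rw [harg, e_add_nat]
  have hnorm : ∀ n : ℕ, ‖(fun n : ℕ => e ((n : ℝ) ^ k * ((a : ℝ) / (q : ℝ)))) n‖ ≤ 1 :=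
    fun n => le_of_eq (norm_e _)
  have hmain := periodic_criterion (fun n : ℕ => e ((n : ℝ) ^ k * ((a : ℝ) / (q : ℝ)))) q hq
    hper hnorm
  rw [hmain]
  constructor <;> intro h <;> rw [← h] <;> exact Finset.sum_congr rfl fun n _ => by
    rw [mul_comm]
end

section
/- Let $p$ be a prime, $k \in \mathbb{N}$ with $k \geq 2$, and $a \in \mathbb{Z}$ with $\gcd(a, p) = 1$ and $\gcd(k, p) = 1$. Then $\sum_{n=1}^{p^k} e\big( \frac{a}{p^k} n^k \big) = p^{k-1}$. In particular, since this complete sum is nonzero, the series $\sum_{n=1}^{\infty} e(n^k x)/n$ diverges at the point $x = a/p^k$. -/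
open Filter

lemma e_add (x y : ℝ) : e (x + y) = e x * e y := by
  simp only [e, Complex.ofReal_add, mul_add, Complex.exp_add]

lemma e_int (m : ℤ) : e m = 1 := by
  have h := Complex.exp_int_mul_two_pi_mul_I m
  rw [e]
  rw [show (2 * (Real.pi:ℂ) * Complex.I * ((m:ℝ):ℂ)) = (m:ℂ) * (2 * (Real.pi:ℂ) * Complex.I) by
    push_cast; ring]
  exact h

lemma e_norm (x : ℝ) : ‖e x‖ = 1 := by
  rw [e, Complex.norm_exp]
  have : (2 * (Real.pi:ℂ) * Complex.I * (x:ℂ)).re = 0 := by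
    simp [Complex.mul_re, Complex.mul_im]
  rw [this, Real.exp_zero]

/-- `E q m = e(m/q)` -/
noncomputable def E (q : ℕ) (m : ℤ) : ℂ := e ((m : ℝ) / (q : ℝ))

lemma E_add (q : ℕ) (x y : ℤ) : E q (x + y) = E q x * E q y := by
  rw [E, E, E, ← e_add]
  congr 1
  push_cast
  ring

lemma E_zero (q : ℕ) : E q 0 = 1 := by
  have := e_int 0
  simpa [E] using this

lemma E_dvd (q : ℕ) (x : ℤ) (h : (q:ℤ) ∣ x) : E q x = 1 := by
  rcases eq_or_ne q 0 with rfl | hq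
  · rcases h with ⟨c, rfl⟩
    simpa [E] using e_int 0
  obtain ⟨c, rfl⟩ := h
  rw [E]
  have : ((((q:ℤ) * c : ℤ)):ℝ) / (q:ℝ) = ((c:ℤ):ℝ) := by
    push_cast
    field_simp
  rw [this]
  exact e_int c

lemma E_congr {q : ℕ} {x y : ℤ} (h : x ≡ y [ZMOD q]) : E q x = E q y := by
  obtain ⟨c, hc⟩ := h.dvd
  have : x = y + (q:ℤ) * (-c) := by linarith [hc]
  rw [this, E_add, E_dvd q _ ⟨-c, rfl⟩, mul_comm, one_mul]


lemma E_pow (q : ℕ) (c : ℤ) (t : ℕ) : E q c ^ t = E q (c * t) := by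
  rw [E, E, e, e, ← Complex.exp_nat_mul]
  congr 1
  push_cast
  ring

lemma E_eq_one_iff (q : ℕ) (hq : 0 < q) (c : ℤ) : E q c = 1 ↔ (q:ℤ) ∣ c := by
  constructor
  · intro h
    rw [E, e, Complex.exp_eq_one_iff] at h
    obtain ⟨n, hn⟩ := h
    push_cast at hn
    have hne : (2 * (Real.pi:ℂ) * Complex.I) ≠ 0 := by
      simp [Real.pi_ne_zero, Complex.I_ne_zero]
    have h2 : ((c:ℂ)/(q:ℂ)) = (n:ℂ) := by
      apply mul_left_cancel₀ hne
      rw [hn]; ring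
    have hq0 : (q:ℂ) ≠ 0 := Nat.cast_ne_zero.mpr hq.ne'
    have h3 : (c:ℂ) = (n:ℂ) * (q:ℂ) := by
      field_simp at h2
      linear_combination h2
    have : (c:ℤ) = n * q := by exact_mod_cast h3
    exact ⟨n, by linarith [this]⟩
  · intro h
    rcases h with ⟨d, rfl⟩
    rw [E]
    have : ((((q:ℤ) * d : ℤ)):ℝ) / (q:ℝ) = ((d:ℤ):ℝ) := by
      push_cast
      field_simp
    rw [this]
    exact e_int d

lemma binom_mod (N x m : ℤ) (hx : N ∣ x^2) :
    ∀ j : ℕ, (x + m)^(j+1) ≡ m^(j+1) + (j+1) * m^j * x [ZMOD N] := by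
  intro j
  induction j with
  | zero => simpa [add_comm] using (Int.ModEq.refl (x + m))
  | succ n ih =>
    have h0 : x^2 ≡ 0 [ZMOD N] := (Int.modEq_zero_iff_dvd).mpr hx
    calc (x+m)^(n+1+1) = (x+m)^(n+1) * (x+m) := by ring
    _ ≡ (m^(n+1) + (n+1) * m^n * x) * (x+m) [ZMOD N] := ih.mul_right _
    _ = m^(n+1+1) + ((n:ℤ)+1+1) * m^(n+1) * x + ((n:ℤ)+1)*m^n*x^2 := by push_cast; ring
    _ ≡ m^(n+1+1) + ((n:ℤ)+1+1) * m^(n+1) * x + ((n:ℤ)+1)*m^n*0 [ZMOD N] :=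
        Int.ModEq.add_left _ ((h0.mul_left _))
    _ = m^(n+1+1) + ((n+1+1 : ℕ):ℤ) * m^(n+1) * x := by push_cast; ring

lemma sum_range_mul {β : Type*} [AddCommMonoid β] (g : ℕ → β) (b : ℕ) :
    ∀ M : ℕ, ∑ i ∈ Finset.range (M * b), g i
      = ∑ t ∈ Finset.range M, ∑ j ∈ Finset.range b, g (t * b + j)
  | 0 => by simp
  | (M+1) => by
    rw [Finset.sum_range_succ, ← sum_range_mul g b M, show (M+1)*b = M*b + b by ring,
      Finset.range_eq_Ico, ← Finset.sum_Ico_consecutive _ (Nat.zero_le (M*b)) (Nat.le_add_right _ b),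
      Finset.sum_Ico_eq_sum_range]
    simp only [Nat.sub_zero, zero_add]
    congr 1
    rw [Finset.sum_Ico_eq_sum_range, Nat.add_sub_cancel_left]

lemma sum_Icc_one {β : Type*} [AddCommMonoid β] (f : ℕ → β) (N : ℕ) :
    ∑ n ∈ Finset.Icc 1 N, f n = ∑ i ∈ Finset.range N, f (i+1) := by
  rw [← Finset.Ico_add_one_right_eq_Icc, Finset.sum_Ico_eq_sum_range]
  simp [add_comm]

lemma telescope (M : ℕ) :
    ∑ t ∈ Finset.range M, (1/(((t:ℝ)+1)*((t:ℝ)+2))) = 1 - 1/((M:ℝ)+1) := by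
  induction M with
  | zero => simp
  | succ n ih =>
    rw [Finset.sum_range_succ, ih]
    have h1 : ((n:ℝ)+1) ≠ 0 := by positivity
    have h2 : ((n:ℝ)+2) ≠ 0 := by positivity
    push_cast
    field_simp
    ring

lemma key_sum (p : ℕ) (hp : p.Prime) (k : ℕ) (hk : 2 ≤ k) (a : ℤ)
    (hap : Int.gcd a p = 1) (hkp : Nat.Coprime k p) :
    ∑ n ∈ Finset.Icc 1 (p ^ k), E (p^k) (a * (n:ℤ)^k) = (p : ℂ) ^ (k - 1) := by
  set q := p ^ k with hqdef
  have hppos : 0 < p := hp.pos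
  have hq : 0 < q := pow_pos hppos k
  have hk1 : 1 ≤ k := le_trans (by norm_num) hk
  set f : ℕ → ℂ := fun n => E q (a * (n:ℤ)^k) with hf
  -- not p ∣ a, k (as integers)
  have hpa : ¬ (p:ℤ) ∣ a := by
    intro h
    have : (p:ℤ) ∣ (Int.gcd a p : ℤ) := Int.dvd_coe_gcd h dvd_rfl
    rw [hap] at this
    have hd1 : p ∣ 1 := by exact_mod_cast this
    have hle := Nat.le_of_dvd one_pos hd1
    have := hp.one_lt
    omega
  have hpk : ¬ (p:ℤ) ∣ (k:ℤ) := by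
    have : ¬ p ∣ k := (Nat.Prime.coprime_iff_not_dvd hp).mp hkp.symm
    exact_mod_cast fun h => this (Int.ofNat_dvd.mp h)
  have hpZ : Prime (p:ℤ) := Nat.prime_iff_prime_int.mp hp
  -- step 1 : Icc sum = range sum
  have hfq0 : f q = f 0 := by
    apply E_congr
    have h2 : (q:ℤ) ∣ a * (q:ℤ)^k := ((dvd_pow_self (q:ℤ) (by omega : k ≠ 0))).mul_left a
    rw [Int.modEq_iff_dvd, show ((0:ℕ):ℤ) = 0 from rfl, zero_pow (by omega : k ≠ 0),
      mul_zero, zero_sub]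
    exact dvd_neg.mpr h2
  have step1 : ∑ n ∈ Finset.Icc 1 q, f n = ∑ i ∈ Finset.range q, f i := by
    rw [sum_Icc_one]
    have hr : q - 1 + 1 = q := Nat.succ_pred_eq_of_pos hq
    rw [← hr, Finset.sum_range_succ, Finset.sum_range_succ', hr, hfq0]
  -- step 2: double sum
  have step2 : ∑ i ∈ Finset.range q, f i
      = ∑ t ∈ Finset.range p, ∑ m ∈ Finset.range (p^(k-1)), f (t * p^(k-1) + m) := by
    rw [show q = p * p^(k-1) by rw [hqdef, ← pow_succ']; congr 1; omega]
    exact sum_range_mul f (p^(k-1)) p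
  rw [step1, step2, Finset.sum_comm]
  -- inner sum evaluation
  have inner : ∀ m ∈ Finset.range (p^(k-1)),
      ∑ t ∈ Finset.range p, f (t * p^(k-1) + m) = if p ∣ m then (p:ℂ) else 0 := by
    intro m hm
    set c : ℤ := a * k * (m:ℤ)^(k-1) * (p:ℤ)^(k-1) with hc
    have hterm : ∀ t : ℕ, f (t * p^(k-1) + m) = E q (a * (m:ℤ)^k) * (E q c)^t := by
      intro t
      have hx2 : (q:ℤ) ∣ ((t:ℤ) * (p:ℤ)^(k-1))^2 := by
        have h1 : (q:ℤ) ∣ ((p:ℤ)^(k-1))^2 := by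
          rw [← pow_mul]
          exact_mod_cast pow_dvd_pow (p:ℤ) (by omega : k ≤ (k-1)*2)
        calc (q:ℤ) ∣ ((p:ℤ)^(k-1))^2 := h1
        _ ∣ ((t:ℤ) * (p:ℤ)^(k-1))^2 := by rw [mul_pow]; exact dvd_mul_left _ _
      have hb := binom_mod (q:ℤ) ((t:ℤ) * (p:ℤ)^(k-1)) (m:ℤ) hx2 (k-1)
      rw [show k - 1 + 1 = k by omega, show ((k-1:ℕ):ℤ) + 1 = (k:ℤ) by omega] at hb
      have hmod : a * ((t * p^(k-1) + m : ℕ):ℤ)^k ≡ a * (m:ℤ)^k + c * t [ZMOD q] := by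
        have := hb.mul_left a
        calc a * ((t * p^(k-1) + m : ℕ):ℤ)^k
            = a * ((t:ℤ) * (p:ℤ)^(k-1) + (m:ℤ))^k := by push_cast; ring
        _ ≡ a * ((m:ℤ)^k + (k:ℤ) * (m:ℤ)^(k-1) * ((t:ℤ) * (p:ℤ)^(k-1))) [ZMOD q] := this
        _ = a * (m:ℤ)^k + c * t := by rw [hc]; push_cast; ring
      rw [hf]
      simp only []
      rw [E_congr hmod, E_add, E_pow]
    rw [Finset.sum_congr rfl (fun t _ => hterm t), ← Finset.mul_sum]
    by_cases hdvd : p ∣ m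
    · obtain ⟨s, rfl⟩ := hdvd
      have h1 : E q (a * ((p*s : ℕ):ℤ)^k) = 1 := by
        apply E_dvd
        have : ((p:ℤ))^k ∣ ((p*s : ℕ):ℤ)^k := by
          push_cast
          exact pow_dvd_pow_of_dvd (dvd_mul_right _ _) k
        push_cast [hqdef]
        push_cast at this
        exact (this.mul_left a)
      have h2 : E q c = 1 := by
        apply E_dvd
        rw [hc, hqdef]
        push_cast
        have hdd : ((p:ℤ))^k ∣ ((p:ℤ)*s)^(k-1) * (p:ℤ)^(k-1) := by
          rw [mul_pow, mul_comm, ← mul_assoc, ← pow_add]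
          exact Dvd.dvd.mul_right (pow_dvd_pow (p:ℤ) (by omega : k ≤ k-1+(k-1))) _
        calc ((p:ℤ))^k ∣ ((p:ℤ)*s)^(k-1) * (p:ℤ)^(k-1) := hdd
        _ ∣ a * k * ((p:ℤ)*s)^(k-1) * (p:ℤ)^(k-1) := by
            rw [mul_assoc (a * (k:ℤ))]
            exact dvd_mul_left _ _
      rw [h1, h2, if_pos ⟨s, rfl⟩]
      simp
    · have hzeta : E q c ≠ 1 := by
        intro h1
        have hdd := (E_eq_one_iff q hq c).mp h1
        rw [hc, hqdef] at hdd
        have hq' : ((p:ℤ))^k = (p:ℤ)^(k-1) * (p:ℤ) := by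
          rw [← pow_succ]; congr 1; omega
        push_cast at hdd
        rw [hq'] at hdd
        rw [show a * (k:ℤ) * (m:ℤ)^(k-1) * (p:ℤ)^(k-1) = (p:ℤ)^(k-1) * (a * (k:ℤ) * (m:ℤ)^(k-1)) by ring] at hdd
        have hdp : (p:ℤ) ∣ a * (k:ℤ) * (m:ℤ)^(k-1) :=
          (mul_dvd_mul_iff_left (pow_ne_zero (k-1) (by exact_mod_cast hppos.ne' : (p:ℤ) ≠ 0))).mp hdd
        rcases hpZ.dvd_mul.mp hdp with h | h
        · rcases hpZ.dvd_mul.mp h with h' | h'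
          · exact hpa h'
          · exact hpk h'
        · have := hpZ.dvd_of_dvd_pow h
          exact hdvd (by exact_mod_cast this)
      have hzp : (E q c)^p = 1 := by
        rw [E_pow]
        apply E_dvd
        rw [hc, hqdef]
        push_cast
        rw [show a * (k:ℤ) * (m:ℤ)^(k-1) * (p:ℤ)^(k-1) * (p:ℤ) = (p:ℤ)^(k-1+1) * (a * (k:ℤ) * (m:ℤ)^(k-1)) by ring]
        rw [show k - 1 + 1 = k by omega]
        exact dvd_mul_right _ _
      rw [geom_sum_eq hzeta, hzp, if_neg hdvd]
      simp
  rw [Finset.sum_congr rfl inner]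
  rw [show p^(k-1) = p^(k-2) * p by rw [← pow_succ]; congr 1; omega]
  rw [sum_range_mul (fun m => if p ∣ m then (p:ℂ) else 0) p (p^(k-2))]
  have hin : ∀ u ∈ Finset.range (p^(k-2)),
      ∑ r ∈ Finset.range p, (if p ∣ u * p + r then (p:ℂ) else 0) = (p:ℂ) := by
    intro u _
    have h1 : ∀ r ∈ Finset.range p, (if p ∣ u * p + r then (p:ℂ) else 0)
        = if r = 0 then (p:ℂ) else 0 := by
      intro r hr
      have hr' : r < p := Finset.mem_range.mp hr
      congr 1
      simp only [eq_iff_iff]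
      constructor
      · intro hdd
        have hpr : p ∣ r := (Nat.dvd_add_right ⟨u, by ring⟩).mp hdd
        exact Nat.eq_zero_of_dvd_of_lt hpr hr'
      · rintro rfl
        exact ⟨u, by ring⟩
    rw [Finset.sum_congr rfl h1, Finset.sum_ite_eq' (Finset.range p) 0 (fun _ => (p:ℂ))]
    rw [if_pos (Finset.mem_range.mpr hppos)]
  rw [Finset.sum_congr rfl hin, Finset.sum_const, Finset.card_range, nsmul_eq_mul]
  push_cast
  rw [← pow_succ]
  congr 1
  omega

/-- For a prime `p`, `k ≥ 2` and `a` coprime to `p` with `gcd(k,p)=1`, the complete sum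
`∑_{n=1}^{p^k} e(a n^k / p^k)` equals `p^{k-1}`; in particular the series
`∑ e(n^k x)/n` diverges at `x = a/p^k`. -/
theorem gauss_sum_at_prime_power_and_divergence (p : ℕ) (hp : p.Prime)
    (k : ℕ) (hk : 2 ≤ k) (a : ℤ) (hap : Int.gcd a p = 1) (hkp : Nat.Coprime k p) :
    (∑ n ∈ Finset.Icc 1 (p ^ k), e ((a : ℝ) / (p : ℝ) ^ k * (n : ℝ) ^ k)
        = (p : ℂ) ^ (k - 1)) ∧
    ¬ ∃ L : ℂ, Tendsto
        (fun N : ℕ => ∑ n ∈ Finset.Icc 1 N,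
          e ((n : ℝ) ^ k * ((a : ℝ) / (p : ℝ) ^ k)) / n)
        atTop (nhds L) := by
  have hppos : 0 < p := hp.pos
  have hq : 0 < p ^ k := pow_pos hppos k
  have part1 : ∑ n ∈ Finset.Icc 1 (p^k), e ((a:ℝ)/(p:ℝ)^k * (n:ℝ)^k) = (p:ℂ)^(k-1) := by
    rw [Finset.sum_congr rfl (fun n _ => by
      show e ((a:ℝ)/(p:ℝ)^k * (n:ℝ)^k) = E (p^k) (a * (n:ℤ)^k)
      rw [E]; congr 1; push_cast; ring)]
    exact key_sum p hp k hk a hap hkp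
  refine ⟨part1, ?_⟩
  rintro ⟨L, hL⟩
  set q := p ^ k with hqdef
  set g : ℕ → ℂ := fun n => E q (a * (n:ℤ)^k) / (n:ℂ) with hg
  have hSg : ∀ N : ℕ, (∑ n ∈ Finset.Icc 1 N, e ((n:ℝ)^k * ((a:ℝ)/(p:ℝ)^k)) / (n:ℂ))
      = ∑ n ∈ Finset.Icc 1 N, g n := by
    intro N
    apply Finset.sum_congr rfl
    intro n _
    rw [hg]
    show e ((n:ℝ)^k * ((a:ℝ)/(p:ℝ)^k)) / (n:ℂ) = E q (a * (n:ℤ)^k) / (n:ℂ)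
    rw [E, hqdef]; congr 2; push_cast; ring
  have hL' : Tendsto (fun N => ∑ n ∈ Finset.Icc 1 N, g n) atTop (nhds L) :=
    Filter.Tendsto.congr hSg hL
  have hmul : Tendsto (fun M : ℕ => M * q) atTop atTop :=
    tendsto_atTop_mono (fun M => Nat.le_mul_of_pos_right M hq) tendsto_id
  have hLsub : Tendsto (fun M : ℕ => ∑ n ∈ Finset.Icc 1 (M*q), g n) atTop (nhds L) :=
    hL'.comp hmul
  have hbdd : BddAbove (Set.range (fun M : ℕ => ‖∑ n ∈ Finset.Icc 1 (M*q), g n‖)) :=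
    (hLsub.norm).bddAbove_range
  obtain ⟨B, hB⟩ := hbdd
  have hBle : ∀ M : ℕ, ‖∑ n ∈ Finset.Icc 1 (M*q), g n‖ ≤ B := by
    intro M
    exact hB (Set.mem_range_self M)
  -- block decomposition
  have hblock : ∀ M : ℕ, ∑ n ∈ Finset.Icc 1 (M*q), g n
      = ∑ t ∈ Finset.range M, ∑ j ∈ Finset.range q,
          E q (a * ((j+1 : ℕ):ℤ)^k) / ((t*q+j+1 : ℕ) : ℂ) := by
    intro M
    rw [sum_Icc_one g (M*q), sum_range_mul (fun i => g (i+1)) q M]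
    apply Finset.sum_congr rfl
    intro t _
    apply Finset.sum_congr rfl
    intro j _
    rw [hg]
    show E q (a * ((t*q+j+1 : ℕ):ℤ)^k) / ((t*q+j+1 : ℕ):ℂ)
        = E q (a * ((j+1 : ℕ):ℤ)^k) / ((t*q+j+1 : ℕ) : ℂ)
    congr 1
    apply E_congr
    have hbase : ((t*q+j+1 : ℕ):ℤ) ≡ ((j+1 : ℕ):ℤ) [ZMOD (q:ℤ)] := by
      rw [Int.modEq_iff_dvd]
      push_cast
      exact ⟨-(t:ℤ), by ring⟩
    exact (hbase.pow k).mul_left a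
  -- complete sum over one period
  have hsum_unit : ∑ j ∈ Finset.range q, E q (a * ((j+1 : ℕ):ℤ)^k) = (p:ℂ)^(k-1) := by
    have h0 := key_sum p hp k hk a hap hkp
    rw [show (p^k) = q from hqdef.symm] at h0
    rw [sum_Icc_one (fun n : ℕ => E q (a * (n:ℤ)^k)) q] at h0
    simpa using h0
  have hp0 : (p:ℂ) ≠ 0 := Nat.cast_ne_zero.mpr hppos.ne'
  have hq0R : (0:ℝ) < (q:ℝ) := by exact_mod_cast hq
  -- target block value
  have hTf_sum : ∀ t : ℕ,
      (∑ j ∈ Finset.range q, E q (a * ((j+1 : ℕ):ℤ)^k) / (((t:ℂ)+1) * (q:ℂ)))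
        = (1/(p:ℂ)) * (1/((t:ℂ)+1)) := by
    intro t
    rw [← Finset.sum_div, hsum_unit]
    have hqc : (q:ℂ) = (p:ℂ)^(k-1) * (p:ℂ) := by
      rw [hqdef]; push_cast; rw [← pow_succ]; congr 1; omega
    rw [hqc]
    have ht0 : ((t:ℂ)+1) ≠ 0 := Nat.cast_add_one_ne_zero t
    have hpk0 : (p:ℂ)^(k-1) ≠ 0 := pow_ne_zero _ hp0
    field_simp
  -- per-block estimates
  have hEnorm : ∀ x : ℤ, ‖E q x‖ = 1 := fun x => e_norm _
  have hDbound : ∀ t : ℕ,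
      ‖(∑ j ∈ Finset.range q, E q (a * ((j+1 : ℕ):ℤ)^k) / ((t*q+j+1 : ℕ) : ℂ))
          - (1/(p:ℂ)) * (1/((t:ℂ)+1))‖
        ≤ (if t = 0 then (q:ℝ)+1 else 1/((t:ℝ)*((t:ℝ)+1))) := by
    intro t
    by_cases ht : t = 0
    · subst ht
      rw [if_pos rfl]
      refine le_trans (norm_sub_le _ _) ?_
      have h1 : ‖∑ j ∈ Finset.range q, E q (a * ((j+1 : ℕ):ℤ)^k) / ((0*q+j+1 : ℕ) : ℂ)‖
          ≤ (q:ℝ) := by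
        refine le_trans (norm_sum_le _ _) ?_
        have hb : ∀ j ∈ Finset.range q,
            ‖E q (a * ((j+1 : ℕ):ℤ)^k) / ((0*q+j+1 : ℕ) : ℂ)‖ ≤ 1 := by
          intro j _
          rw [norm_div, hEnorm, Complex.norm_natCast]
          rw [div_le_one (by positivity)]
          exact_mod_cast Nat.one_le_iff_ne_zero.mpr (by omega)
        refine le_trans (Finset.sum_le_card_nsmul _ _ 1 hb) ?_
        simp
      have h2 : ‖(1/(p:ℂ)) * (1/(((0:ℕ):ℂ)+1))‖ ≤ 1 := by
        have hp1 : (1:ℝ) ≤ (p:ℝ) := by exact_mod_cast hppos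
        rw [norm_mul]
        have e1 : ‖(1/(p:ℂ))‖ = 1/(p:ℝ) := by
          rw [norm_div, norm_one, Complex.norm_natCast]
        have e2 : ‖1/(((0:ℕ):ℂ)+1)‖ = 1 := by norm_num
        rw [e1, e2, mul_one, div_le_one (by positivity)]
        exact hp1
      linarith
    · rw [if_neg ht]
      have ht1 : (1:ℝ) ≤ (t:ℝ) := by exact_mod_cast Nat.one_le_iff_ne_zero.mpr ht
      rw [← hTf_sum t, ← Finset.sum_sub_distrib]
      refine le_trans (norm_sum_le _ _) ?_
      have hb : ∀ j ∈ Finset.range q,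
          ‖E q (a * ((j+1 : ℕ):ℤ)^k) / ((t*q+j+1 : ℕ) : ℂ)
              - E q (a * ((j+1 : ℕ):ℤ)^k) / (((t:ℂ)+1) * (q:ℂ))‖
            ≤ (q:ℝ)/(((t:ℝ)*(q:ℝ)+1)*(((t:ℝ)+1)*(q:ℝ))) := by
        intro j hj
        have hjq : j < q := Finset.mem_range.mp hj
        have hfac : E q (a * ((j+1 : ℕ):ℤ)^k) / ((t*q+j+1 : ℕ) : ℂ)
              - E q (a * ((j+1 : ℕ):ℤ)^k) / (((t:ℂ)+1) * (q:ℂ))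
            = E q (a * ((j+1 : ℕ):ℤ)^k)
              * ((1:ℂ)/((t*q+j+1 : ℕ) : ℂ) - 1/(((t:ℂ)+1) * (q:ℂ))) := by
          ring
        rw [hfac, norm_mul, hEnorm, one_mul]
        have hx : ((t*q+j+1 : ℕ):ℂ) = ((((t*q+j+1 : ℕ):ℝ)) : ℂ) := by norm_cast
        have hy : ((t:ℂ)+1) * (q:ℂ) = (((((t:ℝ)+1) * (q:ℝ)) : ℝ) : ℂ) := by push_cast; ring
        rw [hx, hy, show (1:ℂ) = ((1:ℝ):ℂ) from rfl, ← Complex.ofReal_div,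
          ← Complex.ofReal_div, ← Complex.ofReal_sub, Complex.norm_real]
        have hxR : (0:ℝ) < ((t*q+j+1 : ℕ):ℝ) := by positivity
        have hyR : (0:ℝ) < ((t:ℝ)+1) * (q:ℝ) := by positivity
        have hjq' : (j:ℝ) + 1 ≤ (q:ℝ) := by exact_mod_cast hjq
        have hj0 : (0:ℝ) ≤ (j:ℝ) := Nat.cast_nonneg j
        have hxy : ((t*q+j+1 : ℕ):ℝ) ≤ ((t:ℝ)+1) * (q:ℝ) := by
          push_cast
          nlinarith [hjq', hq0R]
        rw [Real.norm_eq_abs, abs_of_nonneg (by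
          have := one_div_le_one_div_of_le hxR hxy
          linarith)]
        rw [div_sub_div _ _ (ne_of_gt hxR) (ne_of_gt hyR), one_mul, mul_one]
        apply div_le_div₀ (by positivity)
        · push_cast
          nlinarith [hj0]
        · positivity
        · apply mul_le_mul_of_nonneg_right _ (le_of_lt hyR)
          push_cast
          nlinarith [hj0]
      refine le_trans (Finset.sum_le_card_nsmul _ _ _ hb) ?_
      rw [Finset.card_range, nsmul_eq_mul]
      rw [← mul_div_assoc, div_le_div_iff₀ (by positivity) (by positivity)]
      push_cast
      nlinarith [hq0R, ht1, mul_pos (show (0:ℝ) < (t:ℝ) by linarith) hq0R]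
  -- sum of bounds
  have hdbsum : ∀ M : ℕ,
      ∑ t ∈ Finset.range M, (if t = 0 then (q:ℝ)+1 else 1/((t:ℝ)*((t:ℝ)+1))) ≤ (q:ℝ) + 2 := by
    intro M
    cases M with
    | zero => simp; positivity
    | succ M =>
      rw [Finset.sum_range_succ']
      have hshift : ∀ i : ℕ,
          (if i+1 = 0 then (q:ℝ)+1 else 1/(((i+1:ℕ):ℝ)*(((i+1:ℕ):ℝ)+1)))
            = 1/(((i:ℝ)+1)*((i:ℝ)+2)) := by
        intro i
        rw [if_neg (Nat.succ_ne_zero i)]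
        push_cast
        ring_nf
      rw [Finset.sum_congr rfl (fun i _ => hshift i), telescope M, if_pos rfl]
      have : (0:ℝ) < (M:ℝ) + 1 := by positivity
      have h01 : (0:ℝ) ≤ 1/((M:ℝ)+1) := by positivity
      linarith
  -- global estimate
  have hEst : ∀ M : ℕ, ‖(∑ n ∈ Finset.Icc 1 (M*q), g n)
      - (1/(p:ℂ)) * ∑ t ∈ Finset.range M, (1/((t:ℂ)+1))‖ ≤ (q:ℝ) + 2 := by
    intro M
    rw [hblock M, Finset.mul_sum, ← Finset.sum_sub_distrib]
    refine le_trans (norm_sum_le _ _) ?_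
    refine le_trans (Finset.sum_le_sum (fun t _ => hDbound t)) (hdbsum M)
  -- transfer to the real harmonic sum
  have hHnn : ∀ M : ℕ, (0:ℝ) ≤ ∑ t ∈ Finset.range M, (1/((t:ℝ)+1)) :=
    fun M => Finset.sum_nonneg (fun t _ => by positivity)
  have hfinal : ∀ M : ℕ, (1/(p:ℝ)) * ∑ t ∈ Finset.range M, (1/((t:ℝ)+1)) ≤ B + ((q:ℝ)+2) := by
    intro M
    have hcast : (1/(p:ℂ)) * ∑ t ∈ Finset.range M, (1/((t:ℂ)+1))
        = ((((1/(p:ℝ)) * ∑ t ∈ Finset.range M, (1/((t:ℝ)+1))) : ℝ) : ℂ) := by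
      push_cast
      ring
    have h1 : ‖(1/(p:ℂ)) * ∑ t ∈ Finset.range M, (1/((t:ℂ)+1))‖
        = (1/(p:ℝ)) * ∑ t ∈ Finset.range M, (1/((t:ℝ)+1)) := by
      rw [hcast, Complex.norm_real, Real.norm_eq_abs, abs_of_nonneg]
      exact mul_nonneg (by positivity) (hHnn M)
    have h2 : (1/(p:ℂ)) * ∑ t ∈ Finset.range M, (1/((t:ℂ)+1))
        = (∑ n ∈ Finset.Icc 1 (M*q), g n)
          - ((∑ n ∈ Finset.Icc 1 (M*q), g n)
            - (1/(p:ℂ)) * ∑ t ∈ Finset.range M, (1/((t:ℂ)+1))) := by ring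
    calc (1/(p:ℝ)) * ∑ t ∈ Finset.range M, (1/((t:ℝ)+1))
        = ‖(1/(p:ℂ)) * ∑ t ∈ Finset.range M, (1/((t:ℂ)+1))‖ := h1.symm
    _ = ‖(∑ n ∈ Finset.Icc 1 (M*q), g n)
          - ((∑ n ∈ Finset.Icc 1 (M*q), g n)
            - (1/(p:ℂ)) * ∑ t ∈ Finset.range M, (1/((t:ℂ)+1)))‖ := by rw [← h2]
    _ ≤ ‖∑ n ∈ Finset.Icc 1 (M*q), g n‖
          + ‖(∑ n ∈ Finset.Icc 1 (M*q), g n)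
            - (1/(p:ℂ)) * ∑ t ∈ Finset.range M, (1/((t:ℂ)+1))‖ := norm_sub_le _ _
    _ ≤ B + ((q:ℝ)+2) := add_le_add (hBle M) (hEst M)
  -- contradiction with the divergence of the harmonic series
  have hpR : (0:ℝ) < (p:ℝ) := by exact_mod_cast hppos
  obtain ⟨M, hM⟩ := (Filter.tendsto_atTop.mp Real.tendsto_sum_range_one_div_nat_succ_atTop
      ((p:ℝ) * (B + ((q:ℝ)+2)) + 1)).exists
  have h2 := hfinal M
  have h3 : ∑ t ∈ Finset.range M, (1/((t:ℝ)+1)) ≤ (p:ℝ) * (B + ((q:ℝ)+2)) := by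
    have := mul_le_mul_of_nonneg_left h2 (le_of_lt hpR)
    rw [← mul_assoc, mul_one_div, div_self (ne_of_gt hpR), one_mul] at this
    exact this
  linarith
end

section
/- Let $k \in \mathbb{N}$ with $k \geq 2$. There exists a constant $C = C(k)$ such that for every real $\beta \neq 0$ and all integers $m, N$ with $1 \leq m \leq N \leq |\beta|^{-1/k}$, one has $\Big| \sum_{n=m}^{N} \frac{1}{n(n+1)} \sum_{l=1}^{n} e(l^k \beta) \; - \; \int_{m}^{N} \frac{e(y^k \beta)}{y}\, dy \Big| \leq C$. -/
lemma svi_aux1 (x : ℝ) : ‖Complex.exp (x * Complex.I) - 1‖ ≤ |x| := by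
  rw [Complex.exp_mul_I]
  have h : Complex.cos x + Complex.sin x * Complex.I - 1
      = Complex.ofReal (Real.cos x - 1) + Complex.ofReal (Real.sin x) * Complex.I := by
    push_cast; ring
  rw [h, Complex.norm_add_mul_I]
  have h2 : (Real.cos x - 1) ^ 2 + Real.sin x ^ 2 = (2 * Real.sin (x/2)) ^ 2 := by
    have h1 := Real.cos_two_mul (x/2)
    rw [show 2 * (x/2) = x by ring] at h1
    have h3 := Real.sin_sq_add_cos_sq x
    have h4 := Real.sin_sq_add_cos_sq (x/2)
    nlinarith
  rw [h2, Real.sqrt_sq_eq_abs, abs_mul]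
  have := Real.abs_sin_le_abs (x := x/2)
  rw [abs_div] at this
  rw [abs_two] at this ⊢
  linarith

lemma svi_e_sub_one_le (t : ℝ) : ‖e t - 1‖ ≤ 2 * Real.pi * |t| := by
  have h : (2 * (Real.pi:ℂ) * Complex.I * t) = ((2 * Real.pi * t : ℝ) : ℂ) * Complex.I := by
    push_cast; ring
  rw [e, h]
  refine (svi_aux1 _).trans_eq ?_
  rw [abs_mul, abs_of_nonneg (by positivity : (0:ℝ) ≤ 2 * Real.pi)]

lemma svi_tel (f : ℕ → ℝ) {m N : ℕ} (h : m ≤ N) :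
    ∑ n ∈ Finset.Ico m N, (f (n+1) - f n) = f N - f m := by
  rw [Finset.sum_Ico_eq_sub _ h, Finset.sum_range_sub, Finset.sum_range_sub]
  ring

lemma svi_stepB {m N : ℕ} (hm : 1 ≤ m) (hmN : m ≤ N) :
    |(∑ n ∈ Finset.Icc m N, (1:ℝ)/((n:ℝ)+1)) - (Real.log N - Real.log m)| ≤ 2 := by
  have hbounds : ∀ n ∈ Finset.Ico m N,
      |(1:ℝ)/((n:ℝ)+1) - (Real.log ((n:ℝ)+1) - Real.log n)| ≤ 1/(n:ℝ) - 1/((n:ℝ)+1) := by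
    intro n hn
    have hn1 : 1 ≤ n := hm.trans (Finset.mem_Ico.1 hn).1
    have hnR : (1:ℝ) ≤ (n:ℝ) := by exact_mod_cast hn1
    have hup : Real.log ((n:ℝ)+1) - Real.log n ≤ 1/(n:ℝ) := by
      have h1 : Real.log (((n:ℝ)+1)/n) ≤ ((n:ℝ)+1)/n - 1 :=
        Real.log_le_sub_one_of_pos (by positivity)
      rw [Real.log_div (by positivity) (by positivity)] at h1
      have : ((n:ℝ)+1)/n - 1 = 1/n := by field_simp; ring
      linarith
    have hlo : 1/((n:ℝ)+1) ≤ Real.log ((n:ℝ)+1) - Real.log n := by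
      have h1 : Real.log ((n:ℝ)/((n:ℝ)+1)) ≤ (n:ℝ)/((n:ℝ)+1) - 1 :=
        Real.log_le_sub_one_of_pos (by positivity)
      rw [Real.log_div (by positivity) (by positivity)] at h1
      have : (n:ℝ)/((n:ℝ)+1) - 1 = -(1/((n:ℝ)+1)) := by field_simp; ring
      linarith
    have h2 : (0:ℝ) ≤ 1/(n:ℝ) - 1/((n:ℝ)+1) := by
      rw [sub_nonneg]; apply div_le_div_of_nonneg_left <;> linarith
    rw [abs_le]
    constructor
    · nlinarith
    · linarith
  have htel : ∑ n ∈ Finset.Ico m N, (Real.log ((n:ℝ)+1) - Real.log (n:ℝ))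
      = Real.log N - Real.log m := by
    rw [← svi_tel (fun n => Real.log n) hmN]
    apply Finset.sum_congr rfl; intro n _; push_cast; ring
  have htel2 : ∑ n ∈ Finset.Ico m N, ((1:ℝ)/(n:ℝ) - 1/((n:ℝ)+1)) = 1/(m:ℝ) - 1/(N:ℝ) := by
    have h := svi_tel (fun n => (1:ℝ)/(n:ℝ)) hmN
    calc ∑ n ∈ Finset.Ico m N, ((1:ℝ)/(n:ℝ) - 1/((n:ℝ)+1))
        = -∑ n ∈ Finset.Ico m N, ((1:ℝ)/((n:ℝ)+1) - 1/(n:ℝ)) := by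
          rw [← Finset.sum_neg_distrib]; apply Finset.sum_congr rfl; intros; ring
      _ = -∑ n ∈ Finset.Ico m N, ((fun n : ℕ => (1:ℝ)/(n:ℝ)) (n+1) - (fun n : ℕ => (1:ℝ)/(n:ℝ)) n) := by
          congr 1; apply Finset.sum_congr rfl; intro n _; push_cast; ring
      _ = 1/(m:ℝ) - 1/(N:ℝ) := by rw [h]; ring
  have hsplit : ∑ n ∈ Finset.Icc m N, (1:ℝ)/((n:ℝ)+1)
      = ∑ n ∈ Finset.Ico m N, (1:ℝ)/((n:ℝ)+1) + 1/((N:ℝ)+1) := by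
    rw [← Finset.Ico_add_one_right_eq_Icc, Finset.sum_Ico_succ_top hmN]
  rw [hsplit]
  have heq : (∑ n ∈ Finset.Ico m N, (1:ℝ)/((n:ℝ)+1) + 1/((N:ℝ)+1)) - (Real.log N - Real.log m)
      = (∑ n ∈ Finset.Ico m N, ((1:ℝ)/((n:ℝ)+1) - (Real.log ((n:ℝ)+1) - Real.log n)))
        + 1/((N:ℝ)+1) := by
    rw [Finset.sum_sub_distrib, htel]; ring
  rw [heq]
  have hmR : (1:ℝ) ≤ (m:ℝ) := by exact_mod_cast hm
  have hNR : (1:ℝ) ≤ (N:ℝ) := by exact_mod_cast hm.trans hmN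
  calc |(∑ n ∈ Finset.Ico m N, ((1:ℝ)/((n:ℝ)+1) - (Real.log ((n:ℝ)+1) - Real.log n))) + 1/((N:ℝ)+1)|
      ≤ |∑ n ∈ Finset.Ico m N, ((1:ℝ)/((n:ℝ)+1) - (Real.log ((n:ℝ)+1) - Real.log n))| + |1/((N:ℝ)+1)| :=
        abs_add_le _ _
    _ ≤ (∑ n ∈ Finset.Ico m N, (1/(n:ℝ) - 1/((n:ℝ)+1))) + 1/((N:ℝ)+1) := by
        gcongr
        · exact (Finset.abs_sum_le_sum_abs _ _).trans (Finset.sum_le_sum hbounds)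
        · rw [abs_of_nonneg (by positivity)]
    _ = (1/(m:ℝ) - 1/(N:ℝ)) + 1/((N:ℝ)+1) := by rw [htel2]
    _ ≤ 2 := by
        have h1 : 1/(m:ℝ) ≤ 1 := by rw [div_le_one (by linarith)]; linarith
        have h2 : 1/((N:ℝ)+1) ≤ 1 := by rw [div_le_one (by linarith)]; linarith
        have h3 : (0:ℝ) ≤ 1/(N:ℝ) := by positivity
        linarith

lemma svi_key1 (j : ℕ) (β : ℝ) (m N : ℕ) (hm : 1 ≤ m) (hmN : m ≤ N)
    (hkey : (N:ℝ)^(j+2) * |β| ≤ 1) :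
    ‖∑ n ∈ Finset.Icc m N,
        ((1 : ℂ) / ((n : ℂ) * ((n : ℂ) + 1)) * ∑ l ∈ Finset.Icc 1 n, e ((l : ℝ) ^ (j+2) * β)
          - (1:ℂ)/((n:ℂ)+1))‖ ≤ 2 * Real.pi := by
  set k := j + 2 with hkdef
  have hNR : (1:ℝ) ≤ (N:ℝ) := by exact_mod_cast hm.trans hmN
  have hterm : ∀ n ∈ Finset.Icc m N,
      ‖(1 : ℂ) / ((n : ℂ) * ((n : ℂ) + 1)) * ∑ l ∈ Finset.Icc 1 n, e ((l : ℝ) ^ k * β)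
        - (1:ℂ)/((n:ℂ)+1)‖ ≤ 2 * Real.pi * (N:ℝ)^(j+1) * |β| := by
    intro n hn
    obtain ⟨hn1, hnN⟩ := Finset.mem_Icc.1 hn
    have hn1' := hm.trans hn1
    have hnR : (1:ℝ) ≤ (n:ℝ) := by exact_mod_cast hn1'
    have hnNR : (n:ℝ) ≤ (N:ℝ) := by exact_mod_cast hnN
    have hnne : ((n:ℂ)) ≠ 0 := by
      exact Nat.cast_ne_zero.2 (by omega : n ≠ 0)
    have hnne1 : ((n:ℂ)+1) ≠ 0 := by
      intro h
      have : ((n:ℝ)+1) = 0 := by exact_mod_cast congrArg Complex.re h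
      linarith
    have hrw : (1 : ℂ) / ((n : ℂ) * ((n : ℂ) + 1)) * ∑ l ∈ Finset.Icc 1 n, e ((l : ℝ) ^ k * β)
        - (1:ℂ)/((n:ℂ)+1)
        = (1 : ℂ) / ((n : ℂ) * ((n : ℂ) + 1)) * ∑ l ∈ Finset.Icc 1 n, (e ((l : ℝ) ^ k * β) - 1) := by
      rw [Finset.sum_sub_distrib, Finset.sum_const, Nat.card_Icc]
      simp only [Nat.add_sub_cancel, nsmul_eq_mul, mul_one]
      generalize ∑ l ∈ Finset.Icc 1 n, e ((l : ℝ) ^ k * β) = S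
      field_simp
    rw [hrw, norm_mul]
    have hnorm1 : ‖(1 : ℂ) / ((n : ℂ) * ((n : ℂ) + 1))‖ = 1/((n:ℝ)*((n:ℝ)+1)) := by
      rw [show ((n:ℂ) * ((n:ℂ)+1)) = (((n:ℝ)*((n:ℝ)+1) : ℝ) : ℂ) by push_cast; ring]
      rw [norm_div, norm_one, Complex.norm_real, Real.norm_of_nonneg (by positivity)]
    have hnorm2 : ‖∑ l ∈ Finset.Icc 1 n, (e ((l : ℝ) ^ k * β) - 1)‖
        ≤ (n:ℝ) * (2 * Real.pi * (n:ℝ)^k * |β|) := by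
      refine (norm_sum_le _ _).trans ?_
      have : ∀ l ∈ Finset.Icc 1 n, ‖e ((l : ℝ) ^ k * β) - 1‖ ≤ 2 * Real.pi * (n:ℝ)^k * |β| := by
        intro l hl
        obtain ⟨_, hln⟩ := Finset.mem_Icc.1 hl
        have hlR : (l:ℝ) ≤ (n:ℝ) := by exact_mod_cast hln
        refine (svi_e_sub_one_le _).trans ?_
        rw [abs_mul, abs_pow, Nat.abs_cast]
        have h3 : (l:ℝ)^k ≤ (n:ℝ)^k := by gcongr
        calc 2 * Real.pi * ((l:ℝ)^k * |β|) ≤ 2 * Real.pi * ((n:ℝ)^k * |β|) := by gcongr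
          _ = 2 * Real.pi * (n:ℝ)^k * |β| := by ring
      refine (Finset.sum_le_sum this).trans ?_
      rw [Finset.sum_const, Nat.card_Icc, Nat.add_sub_cancel, nsmul_eq_mul]
    rw [hnorm1]
    calc 1/((n:ℝ)*((n:ℝ)+1)) * ‖∑ l ∈ Finset.Icc 1 n, (e ((l : ℝ) ^ k * β) - 1)‖
        ≤ 1/((n:ℝ)*((n:ℝ)+1)) * ((n:ℝ) * (2 * Real.pi * (n:ℝ)^k * |β|)) := by
          gcongr
      _ ≤ 2 * Real.pi * (N:ℝ)^(j+1) * |β| := by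
          have hnk : (n:ℝ)^k = (n:ℝ)^(j+1) * (n:ℝ) := by rw [hkdef]; ring
          have hNj : (n:ℝ)^(j+1) ≤ (N:ℝ)^(j+1) := by gcongr
          have h1 : 1/((n:ℝ)*((n:ℝ)+1)) * ((n:ℝ) * (2 * Real.pi * (n:ℝ)^k * |β|))
              = 2 * Real.pi * (n:ℝ)^(j+1) * |β| * ((n:ℝ)/((n:ℝ)+1)) := by
            rw [hnk]; field_simp
          rw [h1]
          have h2 : (n:ℝ)/((n:ℝ)+1) ≤ 1 := by rw [div_le_one (by linarith)]; linarith
          calc 2 * Real.pi * (n:ℝ)^(j+1) * |β| * ((n:ℝ)/((n:ℝ)+1))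
              ≤ 2 * Real.pi * (n:ℝ)^(j+1) * |β| * 1 := by gcongr <;> positivity
            _ = 2 * Real.pi * (n:ℝ)^(j+1) * |β| := mul_one _
            _ ≤ 2 * Real.pi * (N:ℝ)^(j+1) * |β| := by gcongr
  refine (norm_sum_le _ _).trans ?_
  refine (Finset.sum_le_sum hterm).trans ?_
  rw [Finset.sum_const, Nat.card_Icc, nsmul_eq_mul]
  have hcard : ((N + 1 - m : ℕ) : ℝ) ≤ (N:ℝ) := by
    have : N + 1 - m ≤ N := by omega
    exact_mod_cast this
  calc ((N + 1 - m : ℕ) : ℝ) * (2 * Real.pi * (N:ℝ)^(j+1) * |β|)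
      ≤ (N:ℝ) * (2 * Real.pi * (N:ℝ)^(j+1) * |β|) := by
        apply mul_le_mul_of_nonneg_right hcard; positivity
    _ = 2 * Real.pi * ((N:ℝ)^(j+2) * |β|) := by ring
    _ ≤ 2 * Real.pi * 1 := by gcongr
    _ = 2 * Real.pi := mul_one _

lemma svi_key3 (j : ℕ) (β : ℝ) (m N : ℕ) (hm : 1 ≤ m) (hmN : m ≤ N)
    (hkey : (N:ℝ)^(j+2) * |β| ≤ 1) :
    ‖((Real.log N - Real.log m : ℝ) : ℂ)
      - ∫ y in (m : ℝ)..(N : ℝ), e (y ^ (j+2) * β) / (y : ℂ)‖ ≤ 2 * Real.pi := by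
  set k := j + 2 with hkdef
  have hmR : (1:ℝ) ≤ (m:ℝ) := by exact_mod_cast hm
  have hNR : (1:ℝ) ≤ (N:ℝ) := by exact_mod_cast hm.trans hmN
  have hmNR : (m:ℝ) ≤ (N:ℝ) := by exact_mod_cast hmN
  have huIcc : Set.uIcc (m:ℝ) (N:ℝ) = Set.Icc (m:ℝ) (N:ℝ) := Set.uIcc_of_le hmNR
  have hconte : Continuous fun y : ℝ => e (y ^ k * β) := by
    unfold e; fun_prop
  have hne : ∀ y ∈ Set.uIcc (m:ℝ) (N:ℝ), (y:ℂ) ≠ 0 := by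
    intro y hy
    rw [huIcc] at hy
    have : (1:ℝ) ≤ y := hmR.trans hy.1
    simp only [ne_eq, Complex.ofReal_eq_zero]
    · exact_mod_cast (by linarith : y ≠ 0)
  have hInt1 : IntervalIntegrable (fun y : ℝ => e (y ^ k * β) / (y:ℂ)) MeasureTheory.volume m N := by
    apply ContinuousOn.intervalIntegrable
    exact (hconte.continuousOn).div (Complex.continuous_ofReal.continuousOn) hne
  have hInt2 : IntervalIntegrable (fun y : ℝ => (1:ℂ) / (y:ℂ)) MeasureTheory.volume m N := by
    apply ContinuousOn.intervalIntegrable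
    exact continuousOn_const.div (Complex.continuous_ofReal.continuousOn) hne
  have hlog : ((Real.log N - Real.log m : ℝ) : ℂ) = ∫ y in (m:ℝ)..(N:ℝ), (1:ℂ)/(y:ℂ) := by
    have h0 : (0:ℝ) ∉ Set.uIcc (m:ℝ) (N:ℝ) := by
      rw [huIcc]; intro h; linarith [h.1]
    have h1 : (∫ y in (m:ℝ)..(N:ℝ), (1:ℝ)/y) = Real.log ((N:ℝ)/(m:ℝ)) := integral_one_div h0
    have h2 : (fun y : ℝ => (1:ℂ)/(y:ℂ)) = fun y : ℝ => (((1:ℝ)/y : ℝ) : ℂ) := by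
      funext y; push_cast; ring
    rw [h2, intervalIntegral.integral_ofReal, h1,
      Real.log_div (by linarith : (N:ℝ) ≠ 0) (by linarith : (m:ℝ) ≠ 0)]
  rw [hlog, ← intervalIntegral.integral_sub hInt2 hInt1]
  have hbound : ∀ y ∈ Set.uIoc (m:ℝ) (N:ℝ),
      ‖(1:ℂ)/(y:ℂ) - e (y ^ k * β) / (y:ℂ)‖ ≤ 2 * Real.pi * (N:ℝ)^(j+1) * |β| := by
    intro y hy
    rw [Set.uIoc_of_le hmNR] at hy
    have hy1 : (1:ℝ) ≤ y := hmR.trans hy.1.le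
    have hyN : y ≤ (N:ℝ) := hy.2
    have hrw : (1:ℂ)/(y:ℂ) - e (y ^ k * β) / (y:ℂ) = (1 - e (y ^ k * β)) / (y:ℂ) := by ring
    rw [hrw, norm_div, Complex.norm_real, Real.norm_of_nonneg (by linarith)]
    have h1 : ‖1 - e (y ^ k * β)‖ ≤ 2 * Real.pi * (y^k * |β|) := by
      rw [norm_sub_rev]
      refine (svi_e_sub_one_le _).trans ?_
      rw [abs_mul, abs_pow, abs_of_nonneg (by linarith : (0:ℝ) ≤ y)]
    calc ‖1 - e (y ^ k * β)‖ / y ≤ 2 * Real.pi * (y^k * |β|) / y := by gcongr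
      _ = 2 * Real.pi * y^(j+1) * |β| * (y / y) := by rw [hkdef]; ring
      _ = 2 * Real.pi * y^(j+1) * |β| := by rw [div_self (by linarith : y ≠ 0), mul_one]
      _ ≤ 2 * Real.pi * (N:ℝ)^(j+1) * |β| := by gcongr
  refine (intervalIntegral.norm_integral_le_of_norm_le_const hbound).trans ?_
  have habs : |(N:ℝ) - (m:ℝ)| ≤ (N:ℝ) := by
    rw [abs_of_nonneg (by linarith)]; linarith
  calc 2 * Real.pi * (N:ℝ)^(j+1) * |β| * |(N:ℝ) - (m:ℝ)|
      ≤ 2 * Real.pi * (N:ℝ)^(j+1) * |β| * (N:ℝ) := by gcongr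
    _ = 2 * Real.pi * ((N:ℝ)^(j+2) * |β|) := by ring
    _ ≤ 2 * Real.pi * 1 := by gcongr
    _ = 2 * Real.pi := mul_one _

/-- For `k ≥ 2` there is `C = C(k)` such that for all `β ≠ 0` and integers
`1 ≤ m ≤ N ≤ |β|^{-1/k}`, the sum `∑_{n=m}^N (n(n+1))⁻¹ ∑_{l=1}^n e(l^k β)` differs
from `∫_m^N e(y^k β)/y dy` by at most `C`. -/
theorem sum_vs_integral (k : ℕ) (hk : 2 ≤ k) :
    ∃ C : ℝ, ∀ β : ℝ, β ≠ 0 → ∀ m N : ℕ, 1 ≤ m → m ≤ N →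
      (N : ℝ) ≤ |β| ^ (-(1 : ℝ) / k) →
      ‖(∑ n ∈ Finset.Icc m N,
            (1 : ℂ) / ((n : ℂ) * ((n : ℂ) + 1)) * ∑ l ∈ Finset.Icc 1 n, e ((l : ℝ) ^ k * β))
          - ∫ y in (m : ℝ)..(N : ℝ), e (y ^ k * β) / (y : ℂ)‖ ≤ C := by
  refine ⟨2 * Real.pi + (2 + 2 * Real.pi), ?_⟩
  intro β hβ m N hm hmN hN
  have hb : (0:ℝ) < |β| := abs_pos.2 hβ
  have hkey : (N:ℝ)^k * |β| ≤ 1 := by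
    have hk0 : (k:ℝ) ≠ 0 := by positivity
    have h2 : (|β| ^ (-(1:ℝ)/k)) ^ k = |β|⁻¹ := by
      rw [← Real.rpow_natCast (|β| ^ (-(1:ℝ)/k)) k, ← Real.rpow_mul hb.le]
      rw [show (-(1:ℝ)/k) * k = -1 by field_simp]
      exact Real.rpow_neg_one _
    have h1 : (N:ℝ)^k ≤ |β|⁻¹ := h2 ▸ pow_le_pow_left₀ (by positivity) hN k
    calc (N:ℝ)^k * |β| ≤ |β|⁻¹ * |β| := by gcongr
      _ = 1 := inv_mul_cancel₀ hb.ne'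
  obtain ⟨j, rfl⟩ : ∃ j, k = j + 2 := ⟨k - 2, by omega⟩
  set S' : ℂ := ∑ n ∈ Finset.Icc m N, (1:ℂ)/((n:ℂ)+1) with hS'def
  set L' : ℂ := ((Real.log N - Real.log m : ℝ) : ℂ) with hL'def
  set T : ℂ := ∑ n ∈ Finset.Icc m N,
      (1 : ℂ) / ((n : ℂ) * ((n : ℂ) + 1)) * ∑ l ∈ Finset.Icc 1 n, e ((l : ℝ) ^ (j+2) * β)
    with hTdef
  set I : ℂ := ∫ y in (m : ℝ)..(N : ℝ), e (y ^ (j+2) * β) / (y : ℂ) with hIdef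
  have key1 : ‖T - S'‖ ≤ 2 * Real.pi := by
    rw [hTdef, hS'def, ← Finset.sum_sub_distrib]
    exact svi_key1 j β m N hm hmN hkey
  have key2 : ‖S' - L'‖ ≤ 2 := by
    have hS : S' = ((∑ n ∈ Finset.Icc m N, (1:ℝ)/((n:ℝ)+1) : ℝ) : ℂ) := by
      rw [hS'def]; push_cast; rfl
    rw [hS, hL'def, ← Complex.ofReal_sub, Complex.norm_real]
    exact svi_stepB hm hmN
  have key3 : ‖L' - I‖ ≤ 2 * Real.pi := svi_key3 j β m N hm hmN hkey
  have hdecomp : T - I = (T - S') + ((S' - L') + (L' - I)) := by ring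
  rw [hdecomp]
  refine (norm_add_le _ _).trans ?_
  have := (norm_add_le (S' - L') (L' - I)).trans (add_le_add key2 key3)
  linarith
end
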